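/- On the Lie algebra 12357A with structure equations de^1=de^2=de^3=0, de^4=-e^{12}, de^5=-e^{14}-e^{23}, de^6=-e^{15}+e^{34}, de^7=-e^{16}+e^{35}, the 3-form ψ₋ = e^{125}+e^{236}+e^{146}+e^{345} is closed: dψ₋=0. Moreover, with ω = -e^{13}+e^{24}-(2/5)e^{56}+(3/5)e^{45}+(3/5)e^{26} and η=e^7, one has ω∧dω = ψ₋∧dη = 0. -/

import Mathlib

noncomputable section

/-- We model the dual `g*` of a 7-dimensional real Lie algebra on `ℝ⁷`. -/
abbrev V7 : Type := Fin 7 → ℝ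

/-- The exterior algebra `Λ•g*` of forms. -/
abbrev E7 : Type := ExteriorAlgebra ℝ V7

/-- The generators `e^1, …, e^7` (indexed `0, …, 6`). -/
def ε (i : Fin 7) : E7 := ExteriorAlgebra.ι ℝ (Pi.single i 1)

/-- The degree-`k` component `Λ^k g*` of the exterior algebra. -/
def deg (k : ℕ) : Submodule ℝ E7 :=
  LinearMap.range (ExteriorAlgebra.ι ℝ : V7 →ₗ[ℝ] E7) ^ k

/-- Dualization `g → g**` induced by the standard basis (identifying `g ≅ ℝ⁷`). -/
def dualize : V7 →ₗ[ℝ] Module.Dual ℝ V7 := (Pi.basisFun ℝ (Fin 7)).toDual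

/-- Interior product (contraction) `ι_v` of forms with a vector `v ∈ g`. -/
def ic (v : V7) : E7 →ₗ[ℝ] E7 := CliffordAlgebra.contractLeft (dualize v)

lemma ic_sq (v : V7) : (ic v) * (ic v) = 0 := by
  ext x
  simp [ic, Module.End.mul_apply, CliffordAlgebra.contractLeft_contractLeft]

/-- Contraction of forms by multivectors (identified with elements of `E7` via the
basis), extended multiplicatively from contraction by vectors. -/
def contra : E7 →ₐ[ℝ] Module.End ℝ E7 :=
  ExteriorAlgebra.lift ℝ
    ⟨{ toFun := ic,
       map_add' := by intro a b; ext x; simp [ic],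
       map_smul' := by intro c a; ext x; simp [ic] }, fun v => ic_sq v⟩

/-- The standard volume form `e^{1234567}`. -/
def vol7 : E7 := ε 0 * ε 1 * ε 2 * ε 3 * ε 4 * ε 5 * ε 6

/-- The standard `G₂` 3-form
`φ₀ = e^{127}+e^{347}+e^{567}+e^{135}-e^{146}-e^{236}-e^{245}`. -/
def phi0 : E7 :=
  ε 0*ε 1*ε 6 + ε 2*ε 3*ε 6 + ε 4*ε 5*ε 6 + ε 0*ε 2*ε 4
    - ε 0*ε 3*ε 5 - ε 1*ε 2*ε 5 - ε 1*ε 3*ε 4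

/-- The standard `G₂` 4-form
`σ₀ = e^{3456}+e^{1256}+e^{1234}+e^{2467}-e^{2357}-e^{1457}-e^{1367}` (the Hodge dual
of `φ₀` for the Euclidean metric and standard orientation). -/
def sigma0 : E7 :=
  ε 2*ε 3*ε 4*ε 5 + ε 0*ε 1*ε 4*ε 5 + ε 0*ε 1*ε 2*ε 3 + ε 1*ε 3*ε 5*ε 6
    - ε 1*ε 2*ε 4*ε 6 - ε 0*ε 3*ε 4*ε 6 - ε 0*ε 2*ε 5*ε 6

/-- A 4-form is positive (stable) if it lies in the `GL(7,ℝ)`-orbit of the standard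
`G₂` 4-form `σ₀`. -/
def Positive4 (σ : E7) : Prop :=
  ∃ A : V7 ≃ₗ[ℝ] V7, ExteriorAlgebra.map (A.toLinearMap) sigma0 = σ

/-- `IsCE dg D` says that `D` is the Chevalley–Eilenberg differential, extended as an
odd (degree-1) derivation to `Λ•g*`, of the Lie algebra whose structure equations are
`d e^i = dg i`: it kills constants and satisfies the graded Leibniz rule against
degree-one elements (this characterizes `D` uniquely). -/
def IsCE (dg : Fin 7 → E7) (D : E7 →ₗ[ℝ] E7) : Prop :=
  D 1 = 0 ∧ ∀ (i : Fin 7) (y : E7), D (ε i * y) = dg i * y - ε i * D y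

/-- Structure equations of the 5-step nilpotent Lie algebra `12357A`:
`de^1 = de^2 = de^3 = 0`, `de^4 = -e^{12}`, `de^5 = -e^{14}-e^{23}`,
`de^6 = -e^{15}+e^{34}`, `de^7 = -e^{16}+e^{35}`. -/
def dg12357A : Fin 7 → E7 :=
  ![0, 0, 0, -(ε 0 * ε 1), -(ε 0 * ε 3) - ε 1 * ε 2,
    -(ε 0 * ε 4) + ε 2 * ε 3, -(ε 0 * ε 5) + ε 2 * ε 4]

/-- `ψ₋ = e^{125}+e^{236}+e^{146}+e^{345}`. -/
def ψm : E7 := ε 0*ε 1*ε 4 + ε 1*ε 2*ε 5 + ε 0*ε 3*ε 5 + ε 2*ε 3*ε 4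
/-- `ω = -e^{13}+e^{24}-(2/5)e^{56}+(3/5)e^{45}+(3/5)e^{26}`. -/
def ω : E7 :=
  -(ε 0 * ε 2) + ε 1 * ε 3 - (2/5 : ℝ) • (ε 4 * ε 5)
    + (3/5 : ℝ) • (ε 3 * ε 4) + (3/5 : ℝ) • (ε 1 * ε 5)
/-- `η = e^7`. -/
def η : E7 := ε 6

lemma eps_sq (i : Fin 7) : ε i * ε i = 0 := ExteriorAlgebra.ι_sq_zero _

lemma eps_sq' (i : Fin 7) (x : E7) : ε i * (ε i * x) = 0 := by
  rw [← mul_assoc, eps_sq, zero_mul]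

lemma eps_swap (i j : Fin 7) (h : j < i) : ε i * ε j = -(ε j * ε i) := by
  exact eq_neg_of_add_eq_zero_left (ExteriorAlgebra.ι_add_mul_swap _ _)

lemma eps_swap' (i j : Fin 7) (h : j < i) (x : E7) :
    ε i * (ε j * x) = -(ε j * (ε i * x)) := by
  rw [← mul_assoc, eps_swap i j h, neg_mul, mul_assoc]

lemma dg0 : dg12357A 0 = 0 := rfl
lemma dg1 : dg12357A 1 = 0 := rfl
lemma dg2 : dg12357A 2 = 0 := rfl
lemma dg3 : dg12357A 3 = -(ε 0 * ε 1) := rfl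
lemma dg4 : dg12357A 4 = -(ε 0 * ε 3) - ε 1 * ε 2 := rfl
lemma dg5 : dg12357A 5 = -(ε 0 * ε 4) + ε 2 * ε 3 := rfl
lemma dg6 : dg12357A 6 = -(ε 0 * ε 5) + ε 2 * ε 4 := rfl

/-- on `12357A`, `dψ₋ = 0`, and `ω ∧ dω = ψ₋ ∧ dη = 0`. -/
theorem stmt11_12357A (D : E7 →ₗ[ℝ] E7) (hD : IsCE dg12357A D) :
    D ψm = 0 ∧ ω * D ω = ψm * D η ∧ ω * D ω = 0 ∧ ψm * D η = 0 := by
  obtain ⟨h1, hL⟩ := hD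
  have Dε : ∀ i, D (ε i) = dg12357A i := by
    intro i
    have := hL i 1
    simpa [h1] using this
  have D2 : ∀ i j, D (ε i * ε j) = dg12357A i * ε j - ε i * dg12357A j := by
    intro i j
    rw [hL, Dε]
  have D3 : ∀ i j k, D (ε i * ε j * ε k)
      = dg12357A i * (ε j * ε k) - ε i * (dg12357A j * ε k) + ε i * (ε j * dg12357A k) := by
    intro i j k
    rw [mul_assoc, hL, hL, Dε, mul_sub, sub_add]
  have key1 : D ψm = 0 := by
    unfold ψm
    simp only [map_add, D3, dg0, dg1, dg2, dg3, dg4, dg5, dg6]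
    simp (config := { decide := true }) only [Matrix.cons_val_zero, Matrix.cons_val_one,
      Matrix.head_cons,       mul_add, add_mul, mul_sub, sub_mul, mul_neg, neg_mul, mul_zero, zero_mul,
      mul_assoc, eps_sq, eps_sq', eps_swap, eps_swap', mul_one, one_mul,
      smul_mul_assoc, mul_smul_comm, neg_neg, neg_zero, zero_add, add_zero, sub_zero, zero_sub]
    module
  have keyω : ω * D ω = 0 := by
    unfold ω
    simp only [map_add, map_sub, map_neg, map_smul, D2, dg0, dg1, dg2, dg3, dg4, dg5, dg6]
    simp (config := { decide := true }) only [Matrix.cons_val_zero, Matrix.cons_val_one,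
      Matrix.head_cons,       mul_add, add_mul, mul_sub, sub_mul, mul_neg, neg_mul, mul_zero, zero_mul,
      mul_assoc, eps_sq, eps_sq', eps_swap, eps_swap', mul_one, one_mul,
      smul_mul_assoc, mul_smul_comm, neg_neg, neg_zero, zero_add, add_zero, sub_zero, zero_sub,
      smul_zero, smul_neg, smul_add, smul_sub]
    module
  have keyη : ψm * D η = 0 := by
    unfold ψm η
    rw [Dε]
    simp only [dg0, dg1, dg2, dg3, dg4, dg5, dg6]
    simp (config := { decide := true }) only [Matrix.cons_val_zero, Matrix.cons_val_one,
      Matrix.head_cons,       mul_add, add_mul, mul_sub, sub_mul, mul_neg, neg_mul, mul_zero, zero_mul,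
      mul_assoc, eps_sq, eps_sq', eps_swap, eps_swap', mul_one, one_mul,
      smul_mul_assoc, mul_smul_comm, neg_neg, neg_zero, zero_add, add_zero, sub_zero, zero_sub]
    module
  exact ⟨key1, keyω.trans keyη.symm, keyω, keyη⟩
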